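/- Suppose the lifted current-charge density vector satisfies assumption (a1) at all points of the form T = tα with t > 0, i.e. Σ_{i=1}^{3} (∂F_i/∂X_i + ∂G_i/∂T_i)(X, tα) = 0 for all X ∈ ℝ³ and t > 0. Then the continuity equation holds: for all X ∈ ℝ³ and t > 0, Σ_{i=1}^{3} ∂j_i/∂X_i (X,t) = −∂ρ/∂t (X,t), i.e. ∇·j = −∂ρ/∂t. -/

import Mathlib

open Real in
lemma hasFDerivAt_norm_of_ne {E : Type*} [NormedAddCommGroup E] [InnerProductSpace ℝ E]
    {x : E} (hx : x ≠ 0) :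
    HasFDerivAt (fun y : E => ‖y‖) ((‖x‖⁻¹ : ℝ) • innerSL ℝ x) x := by
  have h1 : HasFDerivAt (fun y : E => ‖y‖ ^ 2)
      (2 • (innerSL ℝ x).comp (ContinuousLinearMap.id ℝ E)) x := by
    simpa using (hasFDerivAt_id x).norm_sq
  have hne : ‖x‖ ^ 2 ≠ 0 := pow_ne_zero 2 (norm_ne_zero_iff.2 hx)
  have h2 := h1.sqrt hne
  have heq : (fun y : E => √(‖y‖ ^ 2)) = fun y : E => ‖y‖ := by
    ext y; rw [Real.sqrt_sq (norm_nonneg y)]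
  rw [heq] at h2
  convert h2 using 1
  rw [Real.sqrt_sq (norm_nonneg x)]
  ext y
  simp [smul_smul]
  ring


open EuclideanSpace in
/-- If the lifted current-charge density vector, with F_i(X,T) = j_i(X,|T|) and
G_i(X,T) = α_i ρ(X,|T|), satisfies assumption (a1)
Σᵢ (∂F_i/∂X_i + ∂G_i/∂T_i) = 0 at all points with T = tα, t > 0, then the
continuity equation ∇·j = −∂ρ/∂t holds. -/
theorem continuity_equation
    (α : EuclideanSpace ℝ (Fin 3)) (hα : ∑ i, α i ^ 2 = 1)
    (j : Fin 3 → EuclideanSpace ℝ (Fin 3) × ℝ → ℝ)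
    (ρ : EuclideanSpace ℝ (Fin 3) × ℝ → ℝ)
    (hj : ∀ i, ContDiff ℝ 1 (j i)) (hρ : ContDiff ℝ 1 ρ)
    (F G : Fin 3 → EuclideanSpace ℝ (Fin 3) × EuclideanSpace ℝ (Fin 3) → ℝ)
    (hF : ∀ i p, F i p = j i (p.1, ‖p.2‖))
    (hG : ∀ i p, G i p = α i * ρ (p.1, ‖p.2‖))
    (a1 : ∀ (X : EuclideanSpace ℝ (Fin 3)) (t : ℝ), 0 < t →
      ∑ i, (fderiv ℝ (F i) (X, t • α) (single i 1, 0) +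
            fderiv ℝ (G i) (X, t • α) (0, single i 1)) = 0) :
    ∀ (X : EuclideanSpace ℝ (Fin 3)) (t : ℝ), 0 < t →
      ∑ i, fderiv ℝ (j i) (X, t) (single i 1, 0) = -fderiv ℝ ρ (X, t) (0, 1) := by
  intro X t ht
  have hα1 : ‖α‖ = 1 := by
    have h2 : ‖α‖ ^ 2 = 1 := by
      rw [EuclideanSpace.norm_eq, Real.sq_sqrt (by positivity)]
      simpa [Real.norm_eq_abs, sq_abs] using hα
    nlinarith [norm_nonneg α]
  have hTα : ‖t • α‖ = t := by
    rw [norm_smul, hα1, Real.norm_eq_abs, abs_of_pos ht, mul_one]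
  have hTne : t • α ≠ 0 := by
    intro h
    rw [h, norm_zero] at hTα
    exact ht.ne hTα
  have hnorm : HasFDerivAt (fun y : EuclideanSpace ℝ (Fin 3) => ‖y‖) (innerSL ℝ α) (t • α) := by
    have h := hasFDerivAt_norm_of_ne hTne
    refine h.congr_fderiv ?_
    rw [hTα]
    ext y
    simp [real_inner_smul_left]
    field_simp
  set L : (EuclideanSpace ℝ (Fin 3) × EuclideanSpace ℝ (Fin 3)) →L[ℝ]
      (EuclideanSpace ℝ (Fin 3) × ℝ) :=
    (ContinuousLinearMap.fst ℝ _ _).prod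
      ((innerSL ℝ α).comp (ContinuousLinearMap.snd ℝ _ _)) with hL
  have hφ : HasFDerivAt
      (fun p : EuclideanSpace ℝ (Fin 3) × EuclideanSpace ℝ (Fin 3) => (p.1, ‖p.2‖))
      L (X, t • α) :=
    HasFDerivAt.prodMk hasFDerivAt_fst (hnorm.comp (X, t • α) hasFDerivAt_snd)
  have hj' : ∀ i, HasFDerivAt (j i) (fderiv ℝ (j i) (X, t))
      (X, ‖(t • α : EuclideanSpace ℝ (Fin 3))‖) := by
    intro i
    rw [hTα]
    exact (((hj i).differentiable one_ne_zero) _).hasFDerivAt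
  have hρ' : HasFDerivAt ρ (fderiv ℝ ρ (X, t))
      (X, ‖(t • α : EuclideanSpace ℝ (Fin 3))‖) := by
    rw [hTα]
    exact ((hρ.differentiable one_ne_zero) _).hasFDerivAt
  have hFd : ∀ i, fderiv ℝ (F i) (X, t • α) = (fderiv ℝ (j i) (X, t)).comp L := by
    intro i
    have hFe : F i = (j i) ∘
        (fun p : EuclideanSpace ℝ (Fin 3) × EuclideanSpace ℝ (Fin 3) => (p.1, ‖p.2‖)) :=
      funext fun p => hF i p
    rw [hFe]
    exact (HasFDerivAt.comp (X, t • α) (hj' i) hφ).fderiv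
  have hGd : ∀ i, fderiv ℝ (G i) (X, t • α) = α i • ((fderiv ℝ ρ (X, t)).comp L) := by
    intro i
    have hGe : G i = fun p : EuclideanSpace ℝ (Fin 3) × EuclideanSpace ℝ (Fin 3) =>
        α i * ρ (p.1, ‖p.2‖) := funext fun p => hG i p
    rw [hGe]
    exact ((HasFDerivAt.comp (X, t • α) hρ' hφ).const_mul (α i)).fderiv
  have key := a1 X t ht
  have hsum : ∀ i : Fin 3,
      fderiv ℝ (F i) (X, t • α) (single i 1, 0) +
        fderiv ℝ (G i) (X, t • α) (0, single i 1) =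
      fderiv ℝ (j i) (X, t) (single i 1, 0) + α i ^ 2 * fderiv ℝ ρ (X, t) (0, 1) := by
    intro i
    rw [hFd i, hGd i]
    have hinn : (inner ℝ α (single i 1 : EuclideanSpace ℝ (Fin 3)) : ℝ) = α i := by
      rw [real_inner_comm]
      simp [EuclideanSpace.inner_single_left]
    have hL1 : L ((single i 1 : EuclideanSpace ℝ (Fin 3)), (0 : EuclideanSpace ℝ (Fin 3)))
        = ((single i 1 : EuclideanSpace ℝ (Fin 3)), (0 : ℝ)) := by
      simp [hL]
    have hL2 : L ((0 : EuclideanSpace ℝ (Fin 3)), (single i 1 : EuclideanSpace ℝ (Fin 3)))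
        = ((0 : EuclideanSpace ℝ (Fin 3)), α i) := by
      simp [hL, hinn]
    simp only [ContinuousLinearMap.comp_apply, ContinuousLinearMap.smul_apply, hL1, hL2,
      smul_eq_mul]
    have h02 : ((0 : EuclideanSpace ℝ (Fin 3)), α i)
        = α i • ((0 : EuclideanSpace ℝ (Fin 3)), (1 : ℝ)) := by simp
    rw [h02, map_smul, smul_eq_mul]
    ring
  rw [Finset.sum_congr rfl (fun i _ => hsum i), Finset.sum_add_distrib, ← Finset.sum_mul, hα,
    one_mul] at key
  linarith
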